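/- The parameter τ_cp(M) is a lower bound on the CP-rank: for every completely positive matrix M, τ_cp(M) ≤ rank_cp(M). -/

import Mathlib

open scoped Matrix

noncomputable def cpRank {m : ℕ} (M : Matrix (Fin m) (Fin m) ℝ) : ℕ :=
  sInf {r : ℕ | ∃ a : Fin r → Fin m → ℝ,
    (∀ ℓ i, 0 ≤ a ℓ i) ∧ M = ∑ ℓ, Matrix.vecMulVec (a ℓ) (a ℓ)}

noncomputable def tauCP {m : ℕ} (M : Matrix (Fin m) (Fin m) ℝ) : ℝ :=
  sInf {l : ℝ | 0 < l ∧ l⁻¹ • M ∈ convexHull ℝ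
    {X : Matrix (Fin m) (Fin m) ℝ | ∃ x : Fin m → ℝ,
      (∀ i, 0 ≤ x i) ∧ (M - Matrix.vecMulVec x x).PosSemidef ∧
      (∀ i j, x i * x j ≤ M i j) ∧ X = Matrix.vecMulVec x x}}

lemma posSemidef_vecMulVec {m : ℕ} (x : Fin m → ℝ) :
    (Matrix.vecMulVec x x).PosSemidef := by
  rw [Matrix.vecMulVec_eq Unit]
  have h : Matrix.replicateCol Unit x = (Matrix.replicateRow Unit x)ᴴ := by
    ext i j; simp [Matrix.conjTranspose_apply]
  rw [h]
  exact Matrix.posSemidef_conjTranspose_mul_self _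

lemma posSemidef_sum {m : ℕ} {ι : Type*} (s : Finset ι)
    (f : ι → Matrix (Fin m) (Fin m) ℝ) (hf : ∀ i ∈ s, (f i).PosSemidef) :
    (∑ i ∈ s, f i).PosSemidef := by
  classical
  induction s using Finset.induction_on with
  | empty => simpa using (Matrix.PosSemidef.zero (n := Fin m) (R := ℝ))
  | insert _ _ h ih =>
    rw [Finset.sum_insert h]
    exact Matrix.PosSemidef.add (hf _ (Finset.mem_insert_self _ _))
      (ih fun i hi => hf i (Finset.mem_insert_of_mem hi))

lemma tauCP_le_of_decomp {m r : ℕ} (M : Matrix (Fin m) (Fin m) ℝ)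
    (a : Fin r → Fin m → ℝ) (ha0 : ∀ ℓ i, 0 ≤ a ℓ i)
    (haM : M = ∑ ℓ, Matrix.vecMulVec (a ℓ) (a ℓ)) :
    tauCP M ≤ (r : ℝ) := by
  classical
  set T := {X : Matrix (Fin m) (Fin m) ℝ | ∃ x : Fin m → ℝ,
      (∀ i, 0 ≤ x i) ∧ (M - Matrix.vecMulVec x x).PosSemidef ∧
      (∀ i j, x i * x j ≤ M i j) ∧ X = Matrix.vecMulVec x x} with hT
  have hbdd : BddBelow {l : ℝ | 0 < l ∧ l⁻¹ • M ∈ convexHull ℝ T} :=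
    ⟨0, fun l hl => le_of_lt hl.1⟩
  have hterm : ∀ ℓ : Fin r, Matrix.vecMulVec (a ℓ) (a ℓ) ∈ T := by
    intro ℓ
    refine ⟨a ℓ, ha0 ℓ, ?_, ?_, rfl⟩
    · have heq : M - Matrix.vecMulVec (a ℓ) (a ℓ)
          = ∑ k ∈ Finset.univ.erase ℓ, Matrix.vecMulVec (a k) (a k) := by
        rw [haM, ← Finset.add_sum_erase _ _ (Finset.mem_univ ℓ)]
        abel
      rw [heq]
      exact posSemidef_sum _ _ fun k _ => posSemidef_vecMulVec (a k)
    · intro i j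
      have hM_entry : M i j = ∑ k, a k i * a k j := by
        rw [haM]; simp [Matrix.vecMulVec_apply, Matrix.sum_apply]
      rw [hM_entry]
      exact Finset.single_le_sum (f := fun k => a k i * a k j)
        (fun k _ => mul_nonneg (ha0 k i) (ha0 k j)) (Finset.mem_univ ℓ)
  by_cases hr : r = 0
  · subst hr
    have hM0 : M = 0 := by rw [haM]; simp
    have h00 : Matrix.vecMulVec (0 : Fin m → ℝ) (0 : Fin m → ℝ) = 0 := by
      ext i j; simp [Matrix.vecMulVec_apply]
    have h0T : (0 : Matrix (Fin m) (Fin m) ℝ) ∈ T := by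
      refine ⟨0, fun i => le_rfl, ?_, ?_, h00.symm⟩
      · rw [hM0, h00, sub_zero]; exact Matrix.PosSemidef.zero
      · intro i j; simp [hM0]
    have hall : ∀ l : ℝ, 0 < l → l ∈ {l : ℝ | 0 < l ∧ l⁻¹ • M ∈ convexHull ℝ T} := by
      intro l hl
      refine ⟨hl, ?_⟩
      have : l⁻¹ • M = 0 := by rw [hM0]; simp
      rw [this]
      exact subset_convexHull ℝ _ h0T
    have h0 : tauCP M ≤ (0:ℝ) := by
      apply le_of_forall_pos_le_add
      intro ε hε
      have := csInf_le hbdd (hall ε hε)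
      simpa [tauCP, hT] using this
    simpa using h0
  · have hrpos : 0 < (r : ℝ) := by exact_mod_cast Nat.pos_of_ne_zero hr
    have hconv : (r : ℝ)⁻¹ • M ∈ convexHull ℝ T := by
      have hmem' := Finset.centerMass_mem_convexHull (Finset.univ : Finset (Fin r))
        (w := fun _ => (1 : ℝ)) (z := fun ℓ => Matrix.vecMulVec (a ℓ) (a ℓ))
        (fun _ _ => zero_le_one) (by simpa using hrpos) (fun ℓ _ => hterm ℓ)
      have hcm : (Finset.univ : Finset (Fin r)).centerMass (fun _ => (1 : ℝ))
          (fun ℓ => Matrix.vecMulVec (a ℓ) (a ℓ)) = (r : ℝ)⁻¹ • M := by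
        rw [Finset.centerMass, haM]
        simp
      rwa [hcm] at hmem'
    have : tauCP M ≤ r := csInf_le hbdd ⟨hrpos, hconv⟩
    simpa [tauCP, hT] using this

theorem tauCP_le_cpRank {m : ℕ} (M : Matrix (Fin m) (Fin m) ℝ)
    (hM : ∃ (r : ℕ) (a : Fin r → Fin m → ℝ),
      (∀ ℓ i, 0 ≤ a ℓ i) ∧ M = ∑ ℓ, Matrix.vecMulVec (a ℓ) (a ℓ)) :
    tauCP M ≤ (cpRank M : ℝ) := by
  have hmem : cpRank M ∈ {r : ℕ | ∃ a : Fin r → Fin m → ℝ,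
      (∀ ℓ i, 0 ≤ a ℓ i) ∧ M = ∑ ℓ, Matrix.vecMulVec (a ℓ) (a ℓ)} :=
    Nat.sInf_mem hM
  obtain ⟨a, ha0, haM⟩ := hmem
  exact tauCP_le_of_decomp M a ha0 haM
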